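/- arXiv:2411.05837 — 2 statements merged into one kernel-verified Lean document; each statement's English description precedes it below -/
import Mathlib

section
/- For a k-layer neural network f_W(x) = W_k φ(...φ(W_1 x)) with 1-Lipschitz activation φ, φ(0)=0, ‖W_i‖ ≤ B_i, and ‖x‖ ≤ C, the gradient of f_W(x) with respect to the parameters satisfies ‖∇_W f_W(x)‖ ≤ Δ_{k,1}·C, where Δ_{k,1} = Σ_{i=1}^k ∏_{j≠i, j≤k} B_j. -/
open Finset

/-- The `ℓ₂` (spectral) operator norm of a matrix. -/
noncomputable def sNorm {n m : ℕ} (M : Matrix (Fin n) (Fin m) ℝ) : ℝ :=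
  ‖LinearMap.toContinuousLinearMap (Matrix.toEuclideanLin M)‖

/-- A `k`-layer neural network `f_W(x) = W_k φ(W_{k-1} φ(⋯ φ(W_1 x)))` with layer
dimensions `d 0, d 1, …, d k` and weight matrices `W i : ℝ^{d(i+1) × d(i)}`
(so `W 0, …, W (k-1)` are the weights `W_1, …, W_k` of the paper). -/
noncomputable def net (φ : ℝ → ℝ) (d : ℕ → ℕ)
    (W : (i : ℕ) → Matrix (Fin (d (i+1))) (Fin (d i)) ℝ) :
    (k : ℕ) → EuclideanSpace ℝ (Fin (d 0)) → EuclideanSpace ℝ (Fin (d k))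
  | 0 => fun x => x
  | 1 => fun x => Matrix.toEuclideanLin (W 0) x
  | (k+2) => fun x =>
      Matrix.toEuclideanLin (W (k+1)) ((WithLp.equiv 2 _).symm fun j => φ (net φ d W (k+1) x j))

/-- The concatenated parameter vector of the first `k` weight matrices, with the
Euclidean (ℓ₂) norm on the concatenation of all entries. -/
abbrev Params (d : ℕ → ℕ) (k : ℕ) : Type :=
  PiLp 2 (fun i : Fin k => EuclideanSpace ℝ (Fin (d (i.1 + 1)) × Fin (d i.1)))

/-- The weight matrices encoded by a parameter vector (`0` beyond layer `k`). -/
noncomputable def pW (d : ℕ → ℕ) (k : ℕ) (p : Params d k) :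
    (i : ℕ) → Matrix (Fin (d (i+1))) (Fin (d i)) ℝ :=
  fun i => if h : i < k then Matrix.of (fun a b => p ⟨i, h⟩ (a, b)) else 0

/-- The `k`-layer network as a function of its concatenated parameter vector. -/
noncomputable def netP (φ : ℝ → ℝ) (d : ℕ → ℕ) (k : ℕ) (p : Params d k) :
    EuclideanSpace ℝ (Fin (d 0)) → EuclideanSpace ℝ (Fin (d k)) :=
  net φ d (pW d k p) k

/-! ### Auxiliary lemmas -/

lemma sNorm_nonneg' {n m : ℕ} (M : Matrix (Fin n) (Fin m) ℝ) : 0 ≤ sNorm M := norm_nonneg _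

lemma toEL_norm_le {n m : ℕ} (M : Matrix (Fin n) (Fin m) ℝ) (v : EuclideanSpace ℝ (Fin m)) :
    ‖Matrix.toEuclideanLin M v‖ ≤ sNorm M * ‖v‖ := by
  simpa [sNorm] using (LinearMap.toContinuousLinearMap (Matrix.toEuclideanLin M)).le_opNorm v

lemma sNorm_add_le {n m : ℕ} (M N : Matrix (Fin n) (Fin m) ℝ) :
    sNorm (M + N) ≤ sNorm M + sNorm N := by
  unfold sNorm
  rw [map_add, map_add]
  exact norm_add_le _ _

lemma sNorm_zero {n m : ℕ} : sNorm (0 : Matrix (Fin n) (Fin m) ℝ) = 0 := by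
  unfold sNorm; rw [map_zero, map_zero, norm_zero]

/-- Componentwise application of the activation function. -/
noncomputable def phiMap (φ : ℝ → ℝ) {n : ℕ} (v : EuclideanSpace ℝ (Fin n)) :
    EuclideanSpace ℝ (Fin n) :=
  (WithLp.equiv 2 _).symm fun j => φ (v j)

lemma phiMap_lip {φ : ℝ → ℝ} (hφ : LipschitzWith 1 φ) {n : ℕ}
    (v w : EuclideanSpace ℝ (Fin n)) : ‖phiMap φ v - phiMap φ w‖ ≤ ‖v - w‖ := by
  rw [EuclideanSpace.norm_eq, EuclideanSpace.norm_eq]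
  apply Real.sqrt_le_sqrt
  apply Finset.sum_le_sum
  intro i _
  have h1 : (phiMap φ v - phiMap φ w) i = φ (v i) - φ (w i) := rfl
  have h2 : (v - w) i = v i - w i := rfl
  rw [h1, h2]
  have := hφ.dist_le_mul (v i) (w i)
  rw [Real.dist_eq, Real.dist_eq, NNReal.coe_one, one_mul] at this
  simpa [Real.norm_eq_abs] using pow_le_pow_left₀ (abs_nonneg _) this 2

lemma phiMap_norm_le {φ : ℝ → ℝ} (hφ : LipschitzWith 1 φ) (hφ0 : φ 0 = 0) {n : ℕ}
    (v : EuclideanSpace ℝ (Fin n)) : ‖phiMap φ v‖ ≤ ‖v‖ := by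
  have h0 : phiMap φ (0 : EuclideanSpace ℝ (Fin n)) = 0 := by
    unfold phiMap
    ext j
    simp [hφ0]
  simpa [h0] using phiMap_lip hφ v 0

lemma net_succ (φ : ℝ → ℝ) (d : ℕ → ℕ) (W) (k : ℕ) (x) :
    net φ d W (k+2) x = Matrix.toEuclideanLin (W (k+1)) (phiMap φ (net φ d W (k+1) x)) := rfl

/-- Forward bound: `‖f_W(x)‖ ≤ (∏ ‖W_j‖) ‖x‖`. -/
lemma net_norm_le {φ : ℝ → ℝ} (hφ : LipschitzWith 1 φ) (hφ0 : φ 0 = 0) (d : ℕ → ℕ)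
    (W : (i : ℕ) → Matrix (Fin (d (i+1))) (Fin (d i)) ℝ) (x : EuclideanSpace ℝ (Fin (d 0))) :
    ∀ k, ‖net φ d W k x‖ ≤ (∏ j ∈ range k, sNorm (W j)) * ‖x‖
  | 0 => by simp [net]
  | 1 => by
      simpa [net, range_one] using toEL_norm_le (W 0) x
  | (k+2) => by
      rw [net_succ]
      calc ‖Matrix.toEuclideanLin (W (k+1)) (phiMap φ (net φ d W (k+1) x))‖
          ≤ sNorm (W (k+1)) * ‖phiMap φ (net φ d W (k+1) x)‖ := toEL_norm_le _ _
        _ ≤ sNorm (W (k+1)) * ((∏ j ∈ range (k+1), sNorm (W j)) * ‖x‖) := by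
            apply mul_le_mul_of_nonneg_left _ (sNorm_nonneg' _)
            exact (phiMap_norm_le hφ hφ0 _).trans (net_norm_le hφ hφ0 d W x (k+1))
        _ = (∏ j ∈ range (k+2), sNorm (W j)) * ‖x‖ := by
            rw [show (∏ j ∈ range (k+2), sNorm (W j))
                  = (∏ j ∈ range (k+1), sNorm (W j)) * sNorm (W (k+1)) from prod_range_succ _ _]
            ring

/-- Lipschitz bound for the network as a function of its weight matrices. -/
lemma net_diff_le {φ : ℝ → ℝ} (hφ : LipschitzWith 1 φ) (hφ0 : φ 0 = 0) (d : ℕ → ℕ)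
    (W W' : (i : ℕ) → Matrix (Fin (d (i+1))) (Fin (d i)) ℝ) (b : ℕ → ℝ)
    (hW : ∀ j, sNorm (W j) ≤ b j) (hW' : ∀ j, sNorm (W' j) ≤ b j)
    (x : EuclideanSpace ℝ (Fin (d 0))) :
    ∀ k, ‖net φ d W k x - net φ d W' k x‖
      ≤ (∑ i ∈ range k, (∏ j ∈ (range k).erase i, b j) * sNorm (W i - W' i)) * ‖x‖
  | 0 => by simp [net]
  | 1 => by
      have h : net φ d W 1 x - net φ d W' 1 x = Matrix.toEuclideanLin (W 0 - W' 0) x := by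
        show Matrix.toEuclideanLin (W 0) x - Matrix.toEuclideanLin (W' 0) x = _
        rw [map_sub, LinearMap.sub_apply]
      rw [h]
      simpa [range_one] using toEL_norm_le (W 0 - W' 0) x
  | (k+2) => by
      have hb : ∀ j, 0 ≤ b j := fun j => (sNorm_nonneg' (W j)).trans (hW j)
      set u := phiMap φ (net φ d W (k+1) x) with hu
      set u' := phiMap φ (net φ d W' (k+1) x) with hu'
      have hsplit : net φ d W (k+2) x - net φ d W' (k+2) x
          = Matrix.toEuclideanLin (W (k+1) - W' (k+1)) u
            + Matrix.toEuclideanLin (W' (k+1)) (u - u') := by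
        rw [net_succ, net_succ, map_sub, LinearMap.sub_apply, map_sub]
        abel
      have hP : (0:ℝ) ≤ ∏ j ∈ range (k+1), b j := prod_nonneg (fun j _ => hb j)
      have hunorm : ‖u‖ ≤ (∏ j ∈ range (k+1), b j) * ‖x‖ := by
        refine (phiMap_norm_le hφ hφ0 _).trans ((net_norm_le hφ hφ0 d W x (k+1)).trans ?_)
        exact mul_le_mul_of_nonneg_right
          (prod_le_prod (fun j _ => sNorm_nonneg' _) (fun j _ => hW j)) (norm_nonneg x)
      have ih := net_diff_le hφ hφ0 d W W' b hW hW' x (k+1)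
      have huu' : ‖u - u'‖ ≤ ‖net φ d W (k+1) x - net φ d W' (k+1) x‖ := phiMap_lip hφ _ _
      have key : ‖net φ d W (k+2) x - net φ d W' (k+2) x‖
          ≤ sNorm (W (k+1) - W' (k+1)) * ((∏ j ∈ range (k+1), b j) * ‖x‖)
            + b (k+1) * ((∑ i ∈ range (k+1),
                (∏ j ∈ (range (k+1)).erase i, b j) * sNorm (W i - W' i)) * ‖x‖) := by
        rw [hsplit]
        refine (norm_add_le _ _).trans (add_le_add ?_ ?_)
        · exact (toEL_norm_le _ _).trans
            (mul_le_mul_of_nonneg_left hunorm (sNorm_nonneg' _))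
        · refine (toEL_norm_le _ _).trans ?_
          exact mul_le_mul (hW' _) (huu'.trans ih) (norm_nonneg _) (hb _)
      refine key.trans (le_of_eq ?_)
      have e1 : (range (k+2)).erase (k+1) = range (k+1) := by
        rw [range_add_one, erase_insert (by simp)]
      have e2 : ∀ i ∈ range (k+1),
          (∏ j ∈ (range (k+2)).erase i, b j) = b (k+1) * ∏ j ∈ (range (k+1)).erase i, b j := by
        intro i hi
        have : (range (k+2)).erase i = insert (k+1) ((range (k+1)).erase i) := by
          rw [range_add_one, erase_insert_of_ne (by simp at hi; omega)]
        rw [this, prod_insert (by simp)]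
      have e3 : ∑ i ∈ range (k+2), (∏ j ∈ (range (k+2)).erase i, b j) * sNorm (W i - W' i)
          = b (k+1) * (∑ i ∈ range (k+1),
              (∏ j ∈ (range (k+1)).erase i, b j) * sNorm (W i - W' i))
            + (∏ j ∈ range (k+1), b j) * sNorm (W (k+1) - W' (k+1)) := by
        rw [sum_range_succ, e1]
        congr 1
        rw [mul_sum]
        exact sum_congr rfl fun i hi => by rw [e2 i hi]; ring
      rw [e3]
      ring

/-- The spectral norm is at most the entrywise `ℓ₂` (Frobenius) norm. -/
lemma sNorm_le_frob {n m : ℕ} (M : Matrix (Fin n) (Fin m) ℝ) :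
    sNorm M ≤ Real.sqrt (∑ a, ∑ c, M a c ^ 2) := by
  unfold sNorm
  apply ContinuousLinearMap.opNorm_le_bound _ (Real.sqrt_nonneg _)
  intro v
  have hva : ∀ a, (Matrix.toEuclideanLin M v) a = ∑ c, M a c * v c := by
    intro a
    simp [Matrix.toEuclideanLin_apply, Matrix.mulVec, dotProduct]
  rw [LinearMap.coe_toContinuousLinearMap']
  rw [EuclideanSpace.norm_eq, EuclideanSpace.norm_eq]
  simp only [hva, Real.norm_eq_abs, sq_abs]
  rw [← Real.sqrt_mul (by positivity)]
  apply Real.sqrt_le_sqrt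
  calc ∑ a, (∑ c, M a c * v c) ^ 2
      ≤ ∑ a, (∑ c, M a c ^ 2) * (∑ c, v c ^ 2) :=
        Finset.sum_le_sum fun a _ => Finset.sum_mul_sq_le_sq_mul_sq _ _ _
    _ = (∑ a, ∑ c, M a c ^ 2) * ∑ c, v c ^ 2 := by rw [Finset.sum_mul]

lemma block_le (d : ℕ → ℕ) (k : ℕ) (r : Params d k) (i : Fin k) : ‖r i‖ ≤ ‖r‖ := by
  rw [PiLp.norm_eq_of_L2 r]
  rw [Real.le_sqrt (norm_nonneg _)]
  · exact Finset.single_le_sum (f := fun j => ‖r j‖^2) (fun j _ => sq_nonneg _) (mem_univ i)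
  · positivity

lemma pW_diff_le (d : ℕ → ℕ) (k : ℕ) (q p : Params d k) (i : ℕ) (h : i < k) :
    sNorm (pW d k q i - pW d k p i) ≤ ‖q - p‖ := by
  refine (sNorm_le_frob _).trans ?_
  have hentry : ∀ a c, (pW d k q i - pW d k p i) a c = (q - p) ⟨i, h⟩ (a, c) := by
    intro a c
    simp [pW, h]
  have : Real.sqrt (∑ a, ∑ c, ((pW d k q i - pW d k p i) a c) ^ 2) = ‖(q - p) ⟨i, h⟩‖ := by
    rw [EuclideanSpace.norm_eq]
    simp only [hentry, Real.norm_eq_abs, sq_abs]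
    rw [Fintype.sum_prod_type]
  rw [this]
  exact block_le d k (q - p) ⟨i, h⟩

/-- For a `k`-layer network with differentiable `1`-Lipschitz activation `φ`,
`φ 0 = 0`, weight spectral norms at most `B i`, and `‖x‖ ≤ C`, the gradient of
`f_W(x)` with respect to the concatenated parameter vector satisfies
`‖∇_W f_W(x)‖ ≤ Δ_{k,1} C` where `Δ_{k,1} = ∑_{i=1}^k ∏_{j ≠ i} B_j`. -/
theorem net_param_grad_norm_le (φ : ℝ → ℝ) (hφdiff : Differentiable ℝ φ)
    (hφ : LipschitzWith 1 φ) (hφ0 : φ 0 = 0)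
    (d : ℕ → ℕ) (k : ℕ) (B : ℕ → ℝ) (C : ℝ)
    (x : EuclideanSpace ℝ (Fin (d 0))) (hx : ‖x‖ ≤ C)
    (p : Params d k)
    (hp : ∀ i : Fin k, sNorm (pW d k p i.1) ≤ B i.1) :
    ‖fderiv ℝ (fun q : Params d k => netP φ d k q x) p‖
      ≤ (∑ i ∈ range k, ∏ j ∈ (range k).erase i, B j) * C := by
  classical
  have hC : 0 ≤ C := (norm_nonneg x).trans hx
  have hB : ∀ i, i < k → 0 ≤ B i := fun i hi => (sNorm_nonneg' _).trans (hp ⟨i, hi⟩)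
  have key : ∀ ε : ℝ, 0 < ε → ‖fderiv ℝ (fun q : Params d k => netP φ d k q x) p‖
      ≤ (∑ i ∈ range k, ∏ j ∈ (range k).erase i, (B j + ε)) * C := by
    intro ε hε
    have hBε : ∀ j, j < k → 0 ≤ B j + ε := fun j hj => by have := hB j hj; linarith
    have hSnn : 0 ≤ ∑ i ∈ range k, ∏ j ∈ (range k).erase i, (B j + ε) :=
      sum_nonneg fun i _ => prod_nonneg fun j hj => hBε j (mem_range.mp (mem_of_mem_erase hj))
    apply norm_fderiv_le_of_lip' ℝ (mul_nonneg hSnn hC)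
    filter_upwards [Metric.ball_mem_nhds p hε] with q hq
    have hqp : ‖q - p‖ ≤ ε := le_of_lt (by simpa [dist_eq_norm] using hq)
    set b : ℕ → ℝ := fun j => if j < k then B j + ε else 0 with hb
    have hWp : ∀ j, sNorm (pW d k p j) ≤ b j := by
      intro j
      by_cases hj : j < k
      · simp only [hb, if_pos hj]
        exact (hp ⟨j, hj⟩).trans (by linarith)
      · simp [hb, if_neg hj, pW, dif_neg hj, sNorm_zero]
    have hWq : ∀ j, sNorm (pW d k q j) ≤ b j := by
      intro j
      by_cases hj : j < k
      · simp only [hb, if_pos hj]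
        have h1 : sNorm (pW d k q j)
            ≤ sNorm (pW d k p j) + sNorm (pW d k q j - pW d k p j) := by
          simpa using sNorm_add_le (pW d k p j) (pW d k q j - pW d k p j)
        exact h1.trans (add_le_add (hp ⟨j, hj⟩) ((pW_diff_le d k q p j hj).trans hqp))
      · simp [hb, if_neg hj, pW, dif_neg hj, sNorm_zero]
    have hdiff := net_diff_le hφ hφ0 d (pW d k q) (pW d k p) b hWq hWp x k
    have hfq : netP φ d k q x - netP φ d k p x
        = net φ d (pW d k q) k x - net φ d (pW d k p) k x := rfl
    rw [hfq]
    refine hdiff.trans ?_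
    have hterm : ∀ i ∈ range k,
        (∏ j ∈ (range k).erase i, b j) * sNorm (pW d k q i - pW d k p i)
          ≤ (∏ j ∈ (range k).erase i, (B j + ε)) * ‖q - p‖ := by
      intro i hi
      have hprod : (∏ j ∈ (range k).erase i, b j)
          = ∏ j ∈ (range k).erase i, (B j + ε) :=
        prod_congr rfl fun j hj => by simp [hb, mem_range.mp (mem_of_mem_erase hj)]
      rw [hprod]
      exact mul_le_mul_of_nonneg_left (pW_diff_le d k q p i (mem_range.mp hi))
        (prod_nonneg fun j hj => hBε j (mem_range.mp (mem_of_mem_erase hj)))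
    calc (∑ i ∈ range k, (∏ j ∈ (range k).erase i, b j)
            * sNorm (pW d k q i - pW d k p i)) * ‖x‖
        ≤ (∑ i ∈ range k, (∏ j ∈ (range k).erase i, (B j + ε)) * ‖q - p‖) * ‖x‖ :=
          mul_le_mul_of_nonneg_right (sum_le_sum hterm) (norm_nonneg x)
      _ = (∑ i ∈ range k, ∏ j ∈ (range k).erase i, (B j + ε)) * ‖q - p‖ * ‖x‖ := by
          rw [← sum_mul]
      _ ≤ (∑ i ∈ range k, ∏ j ∈ (range k).erase i, (B j + ε)) * ‖q - p‖ * C := by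
          exact mul_le_mul_of_nonneg_left hx (mul_nonneg hSnn (norm_nonneg _))
      _ = (∑ i ∈ range k, ∏ j ∈ (range k).erase i, (B j + ε)) * C * ‖q - p‖ := by ring
  have hcont : Continuous
      (fun ε : ℝ => (∑ i ∈ range k, ∏ j ∈ (range k).erase i, (B j + ε)) * C) := by
    apply Continuous.mul _ continuous_const
    apply continuous_finset_sum
    intro i _
    apply continuous_finset_prod
    intro j _
    exact continuous_const.add continuous_id
  have htend : Filter.Tendsto
      (fun ε : ℝ => (∑ i ∈ range k, ∏ j ∈ (range k).erase i, (B j + ε)) * C)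
      (nhdsWithin 0 (Set.Ioi 0))
      (nhds ((∑ i ∈ range k, ∏ j ∈ (range k).erase i, (B j + 0)) * C)) :=
    (hcont.tendsto 0).mono_left nhdsWithin_le_nhds
  have hfin := ge_of_tendsto htend (by
    filter_upwards [self_mem_nhdsWithin] with ε hε
    exact key ε hε)
  simpa using hfin
end

section
/- Let f_W(x) be a k-layer neural network with 1-Lipschitz activation φ, φ(0)=0, ‖W_i‖ ≤ B_i, ‖x‖ ≤ C with B_i, C ≥ 1, and let ℓ(·, y) : ℝ^c → ℝ be 1-Lipschitz for every label y. Then the training loss W ↦ ℓ(f_W(x), y) is L-Lipschitz in the parameters with L ≤ Δ_{k,1}·C. If additionally φ and ℓ(·, y) are 1-smooth, the training loss is β-smooth with β ≤ (3k+1)·Δ_{k,1}²·C². -/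
open Finset

noncomputable def matCLM {n m : ℕ} (M : Matrix (Fin n) (Fin m) ℝ) :
    EuclideanSpace ℝ (Fin m) →L[ℝ] EuclideanSpace ℝ (Fin n) :=
  LinearMap.toContinuousLinearMap (Matrix.toEuclideanLin M)

lemma matCLM_le {n m : ℕ} (M : Matrix (Fin n) (Fin m) ℝ) (v : EuclideanSpace ℝ (Fin m)) :
    ‖matCLM M v‖ ≤ sNorm M * ‖v‖ := (matCLM M).le_opNorm v

lemma coord_le_norm {ι : Type*} [Fintype ι] {f : ι → Type*} [∀ i, SeminormedAddCommGroup (f i)]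
    (w : PiLp 2 f) (i : ι) : ‖w i‖ ≤ ‖w‖ := by
  rw [PiLp.norm_eq_of_L2]
  have h1 : ‖w i‖ ^ 2 ≤ ∑ j, ‖w j‖ ^ 2 :=
    Finset.single_le_sum (f := fun j => ‖w j‖ ^ 2) (fun j _ => by positivity) (mem_univ i)
  calc ‖w i‖ = Real.sqrt (‖w i‖ ^ 2) := (Real.sqrt_sq (norm_nonneg _)).symm
    _ ≤ _ := Real.sqrt_le_sqrt h1

lemma euclid_norm_le {n : ℕ} (w v : EuclideanSpace ℝ (Fin n)) (a : ℝ) (ha : 0 ≤ a)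
    (h : ∀ i, |w i| ≤ a * |v i|) : ‖w‖ ≤ a * ‖v‖ := by
  rw [EuclideanSpace.norm_eq, EuclideanSpace.norm_eq]
  rw [← Real.sqrt_sq ha, ← Real.sqrt_mul (by positivity)]
  apply Real.sqrt_le_sqrt
  rw [mul_sum]
  apply sum_le_sum
  intro i _
  have := h i
  have h2 : ‖w i‖ ^ 2 ≤ (a * |v i|) ^ 2 := by
    apply pow_le_pow_left₀ (norm_nonneg _)
    rwa [Real.norm_eq_abs]
  calc ‖w i‖ ^ 2 ≤ (a * |v i|) ^ 2 := h2
    _ = a ^ 2 * ‖v i‖ ^ 2 := by rw [mul_pow, Real.norm_eq_abs, sq_abs]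

lemma sNorm_le_frobenius {n m : ℕ} (M : Matrix (Fin n) (Fin m) ℝ) :
    sNorm M ≤ Real.sqrt (∑ a, ∑ b, (M a b) ^ 2) := by
  apply ContinuousLinearMap.opNorm_le_bound _ (Real.sqrt_nonneg _)
  intro v
  show ‖Matrix.toEuclideanLin M v‖ ≤ _
  have hentry : ∀ a, (Matrix.toEuclideanLin M v) a = ∑ b, M a b * v b := by
    intro a
    rw [Matrix.toEuclideanLin_apply]
    rfl
  rw [EuclideanSpace.norm_eq]
  rw [← Real.sqrt_sq (norm_nonneg v), ← Real.sqrt_mul (by positivity)]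
  apply Real.sqrt_le_sqrt
  have hv : ‖v‖ ^ 2 = ∑ b, (v b) ^ 2 := by
    rw [PiLp.norm_sq_eq_of_L2]
    simp [Real.norm_eq_abs, sq_abs]
  rw [hv, sum_mul]
  apply sum_le_sum
  intro a _
  rw [hentry a, Real.norm_eq_abs, sq_abs]
  calc (∑ b, M a b * v b) ^ 2 ≤ (∑ b, (M a b) ^ 2) * ∑ b, (v b) ^ 2 :=
        sum_mul_sq_le_sq_mul_sq _ _ _
    _ = _ := rfl

noncomputable def diagCLM {n : ℕ} (c : Fin n → ℝ) :
    EuclideanSpace ℝ (Fin n) →L[ℝ] EuclideanSpace ℝ (Fin n) :=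
  LinearMap.toContinuousLinearMap
    { toFun := fun v => (WithLp.equiv 2 _).symm fun i => c i * v i
      map_add' := by
        intro u v; ext i
        simp [mul_add]
      map_smul' := by
        intro t v; ext i
        simp [mul_comm, mul_left_comm] }

lemma diagCLM_apply {n : ℕ} (c : Fin n → ℝ) (v : EuclideanSpace ℝ (Fin n)) (i : Fin n) :
    diagCLM c v i = c i * v i := rfl

lemma diagCLM_norm_le {n : ℕ} {c : Fin n → ℝ} {a : ℝ} (ha : 0 ≤ a) (h : ∀ i, |c i| ≤ a)
    (v : EuclideanSpace ℝ (Fin n)) : ‖diagCLM c v‖ ≤ a * ‖v‖ := by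
  apply euclid_norm_le _ v a ha
  intro i
  rw [diagCLM_apply, abs_mul]
  exact mul_le_mul_of_nonneg_right (h i) (abs_nonneg _)

lemma diagCLM_sub_apply {n : ℕ} (c c' : Fin n → ℝ) (v : EuclideanSpace ℝ (Fin n)) :
    diagCLM c v - diagCLM c' v = diagCLM (c - c') v := by
  ext i
  simp [diagCLM_apply, sub_mul]

noncomputable def Phi (ψ : ℝ → ℝ) (n : ℕ) (u : EuclideanSpace ℝ (Fin n)) :
    EuclideanSpace ℝ (Fin n) :=
  (WithLp.equiv 2 _).symm fun i => ψ (u i)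

lemma Phi_apply (ψ : ℝ → ℝ) {n : ℕ} (u : EuclideanSpace ℝ (Fin n)) (i : Fin n) :
    Phi ψ n u i = ψ (u i) := rfl

lemma abs_sub_le_of_lip {ψ : ℝ → ℝ} (hψ : LipschitzWith 1 ψ) (s t : ℝ) :
    |ψ s - ψ t| ≤ |s - t| := by
  have := hψ.dist_le_mul s t
  rwa [Real.dist_eq, Real.dist_eq, NNReal.coe_one, one_mul] at this

lemma norm_Phi_le {ψ : ℝ → ℝ} (hψ : LipschitzWith 1 ψ) (hψ0 : ψ 0 = 0) {n : ℕ}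
    (u : EuclideanSpace ℝ (Fin n)) : ‖Phi ψ n u‖ ≤ ‖u‖ := by
  have := euclid_norm_le (Phi ψ n u) u 1 zero_le_one (fun i => by
    rw [Phi_apply, one_mul]
    have := abs_sub_le_of_lip hψ (u i) 0
    rwa [hψ0, sub_zero, sub_zero] at this)
  simpa using this

lemma norm_Phi_sub_le {ψ : ℝ → ℝ} (hψ : LipschitzWith 1 ψ) {n : ℕ}
    (u v : EuclideanSpace ℝ (Fin n)) : ‖Phi ψ n u - Phi ψ n v‖ ≤ ‖u - v‖ := by
  have := euclid_norm_le (Phi ψ n u - Phi ψ n v) (u - v) 1 zero_le_one (fun i => by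
    have h1 : (Phi ψ n u - Phi ψ n v) i = ψ (u i) - ψ (v i) := by
      simp [Phi_apply]
    have h2 : (u - v) i = u i - v i := by simp
    rw [h1, h2, one_mul]
    exact abs_sub_le_of_lip hψ (u i) (v i))
  simpa using this

lemma hasFDerivAt_Phi {ψ : ℝ → ℝ} (hψ : Differentiable ℝ ψ) {n : ℕ}
    (u : EuclideanSpace ℝ (Fin n)) :
    HasFDerivAt (Phi ψ n) (diagCLM fun i => deriv ψ (u i)) u := by
  set e : EuclideanSpace ℝ (Fin n) ≃L[ℝ] (Fin n → ℝ) := EuclideanSpace.equiv (Fin n) ℝ with he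
  set Dg : (Fin n → ℝ) →L[ℝ] (Fin n → ℝ) :=
    ContinuousLinearMap.pi (fun i => deriv ψ (u i) • ContinuousLinearMap.proj i) with hDg
  have hg : HasFDerivAt (fun w : Fin n → ℝ => fun i => ψ (w i)) Dg (e u) := by
    apply hasFDerivAt_pi'.2
    intro i
    rw [hDg, ContinuousLinearMap.proj_pi]
    have h1 : HasDerivAt ψ (deriv ψ (u i)) ((e u) i) := (hψ (u i)).hasDerivAt
    have h2 : HasFDerivAt (fun w : Fin n → ℝ => w i)
        (ContinuousLinearMap.proj (R := ℝ) (φ := fun _ : Fin n => ℝ) i) (e u) :=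
      (ContinuousLinearMap.proj (R := ℝ) (φ := fun _ : Fin n => ℝ) i).hasFDerivAt
    exact h1.comp_hasFDerivAt (e u) h2
  have h3 : HasFDerivAt (⇑e) (e : EuclideanSpace ℝ (Fin n) →L[ℝ] (Fin n → ℝ)) u :=
    e.toContinuousLinearMap.hasFDerivAt
  have h4 := hg.comp u h3
  have h5 := ((e.symm : (Fin n → ℝ) →L[ℝ] EuclideanSpace ℝ (Fin n)).hasFDerivAt).comp u h4
  have hfun : (⇑(e.symm : (Fin n → ℝ) →L[ℝ] EuclideanSpace ℝ (Fin n)) ∘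
      (fun w : Fin n → ℝ => fun i => ψ (w i)) ∘ ⇑e) = Phi ψ n := by
    funext v
    rfl
  have hlin : ((e.symm : (Fin n → ℝ) →L[ℝ] EuclideanSpace ℝ (Fin n)).comp
        (Dg.comp (e : EuclideanSpace ℝ (Fin n) →L[ℝ] (Fin n → ℝ))))
      = diagCLM fun i => deriv ψ (u i) := by
    ext v i
    simp only [ContinuousLinearMap.coe_comp', Function.comp_apply, ContinuousLinearMap.coe_coe]
    rfl
  rw [hfun, hlin] at h5
  exact h5

lemma net_succ_s8 (φ : ℝ → ℝ) (d : ℕ → ℕ)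
    (W : (i : ℕ) → Matrix (Fin (d (i+1))) (Fin (d i)) ℝ) (j : ℕ)
    (x : EuclideanSpace ℝ (Fin (d 0))) :
    net φ d W (j+1) x
      = matCLM (W j) (Phi (if j = 0 then (id : ℝ → ℝ) else φ) (d j) (net φ d W j x)) := by
  cases j with
  | zero => rfl
  | succ j => rfl

lemma pW_sub (d : ℕ → ℕ) (k : ℕ) (p q : Params d k) (i : ℕ) :
    pW d k (p - q) i = pW d k p i - pW d k q i := by
  unfold pW
  split
  · ext a b
    simp [Matrix.of_apply, Matrix.sub_apply]
  · simp

lemma sNorm_pW_le (d : ℕ → ℕ) (k : ℕ) (v : Params d k) (i : ℕ) :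
    sNorm (pW d k v i) ≤ ‖v‖ := by
  unfold pW
  split
  case isTrue h =>
    refine (sNorm_le_frobenius _).trans ?_
    refine le_trans (le_of_eq ?_) (coord_le_norm v ⟨i, h⟩)
    rw [EuclideanSpace.norm_eq]
    congr 1
    rw [Fintype.sum_prod_type]
    apply Finset.sum_congr rfl
    intro a _
    apply Finset.sum_congr rfl
    intro b _
    rw [Real.norm_eq_abs, sq_abs]
    rfl
  case isFalse h =>
    rw [sNorm_zero]
    exact norm_nonneg v

lemma isBBM (d : ℕ → ℕ) (k : ℕ) (j : ℕ) : IsBoundedBilinearMap ℝ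
    (fun pu : Params d k × EuclideanSpace ℝ (Fin (d j)) => matCLM (pW d k pu.1 j) pu.2) := by
  have hlin : ∀ (p q : Params d k), pW d k (p + q) j = pW d k p j + pW d k q j := by
    intro p q
    unfold pW
    split
    · ext a b; simp [Matrix.of_apply, Matrix.add_apply]
    · simp
  have hsmul : ∀ (c : ℝ) (p : Params d k), pW d k (c • p) j = c • pW d k p j := by
    intro c p
    unfold pW
    split
    · ext a b; simp [Matrix.of_apply, Matrix.smul_apply]
    · simp
  constructor
  · intro p1 p2 u; simp [hlin, matCLM, map_add]
  · intro c p u; simp [hsmul, matCLM, map_smul]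
  · intro p u1 u2; simp
  · intro c p u; simp
  · refine ⟨1, one_pos, fun p u => ?_⟩
    rw [one_mul]
    exact (matCLM_le _ u).trans
      (mul_le_mul_of_nonneg_right (sNorm_pW_le d k p j) (norm_nonneg u))

section arith
variable {B : ℕ → ℝ}

lemma one_le_Pr (hB : ∀ i, 1 ≤ B i) (j : ℕ) : 1 ≤ ∏ i ∈ range j, B i := by
  calc (1:ℝ) = ∏ _i ∈ range j, (1:ℝ) := by simp
    _ ≤ ∏ i ∈ range j, B i :=
      Finset.prod_le_prod (fun i _ => zero_le_one) (fun i _ => hB i)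

lemma Pr_nonneg (hB : ∀ i, 1 ≤ B i) (j : ℕ) : 0 ≤ ∏ i ∈ range j, B i :=
  zero_le_one.trans (one_le_Pr hB j)

lemma Δ_nonneg (hB : ∀ i, 1 ≤ B i) (j : ℕ) :
    0 ≤ ∑ i ∈ range j, ∏ l ∈ (range j).erase i, B l :=
  Finset.sum_nonneg fun i _ => Finset.prod_nonneg fun l _ => zero_le_one.trans (hB l)

lemma Δ_succ (hB : ∀ i, 1 ≤ B i) (j : ℕ) :
    (∑ i ∈ range (j+1), ∏ l ∈ (range (j+1)).erase i, B l)
      = B j * (∑ i ∈ range j, ∏ l ∈ (range j).erase i, B l) + ∏ i ∈ range j, B i := by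
  rw [Finset.sum_range_succ]
  have h1 : (range (j+1)).erase j = range j := by
    rw [Finset.range_add_one, Finset.erase_insert (by simp)]
  have h2 : ∀ i ∈ range j, (∏ l ∈ (range (j+1)).erase i, B l)
      = B j * ∏ l ∈ (range j).erase i, B l := by
    intro i hi
    have hij : i ≠ j := by intro h; subst h; exact absurd hi (by simp)
    rw [Finset.range_add_one, Finset.erase_insert_of_ne (Ne.symm hij),
      Finset.prod_insert (by simp)]
  rw [h1, Finset.sum_congr rfl h2, ← Finset.mul_sum]

lemma one_le_Δ_succ (hB : ∀ i, 1 ≤ B i) (j : ℕ) :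
    1 ≤ ∑ i ∈ range (j+1), ∏ l ∈ (range (j+1)).erase i, B l := by
  rw [Δ_succ hB]
  have h1 := mul_nonneg (zero_le_one.trans (hB j)) (Δ_nonneg hB j)
  have h2 := one_le_Pr hB j
  linarith

lemma Δ_le_succ (hB : ∀ i, 1 ≤ B i) (j : ℕ) :
    (∑ i ∈ range j, ∏ l ∈ (range j).erase i, B l)
      ≤ ∑ i ∈ range (j+1), ∏ l ∈ (range (j+1)).erase i, B l := by
  rw [Δ_succ hB]
  have h1 : (∑ i ∈ range j, ∏ l ∈ (range j).erase i, B l)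
      ≤ B j * ∑ i ∈ range j, ∏ l ∈ (range j).erase i, B l := by
    nlinarith [Δ_nonneg hB j, hB j]
  have h2 := Pr_nonneg hB j
  linarith

lemma Δ_le_sq (hB : ∀ i, 1 ≤ B i) (j : ℕ) :
    (∑ i ∈ range j, ∏ l ∈ (range j).erase i, B l)
      ≤ (∑ i ∈ range j, ∏ l ∈ (range j).erase i, B l) ^ 2 := by
  cases j with
  | zero => simp
  | succ j => nlinarith [one_le_Δ_succ hB j]

end arith

lemma matCLM_sub_left {n m : ℕ} (M N : Matrix (Fin n) (Fin m) ℝ) (v : EuclideanSpace ℝ (Fin m)) :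
    matCLM (M - N) v = matCLM M v - matCLM N v := by
  simp [matCLM, map_sub]

lemma abs_deriv_le_one {ψ : ℝ → ℝ} (hψ : LipschitzWith 1 ψ) (hd : Differentiable ℝ ψ) (t : ℝ) :
    |deriv ψ t| ≤ 1 := by
  have h := (hd t).hasDerivAt.hasFDerivAt.le_of_lipschitz hψ
  simpa [Real.norm_eq_abs] using h

lemma main_ind (φ : ℝ → ℝ) (hφ : LipschitzWith 1 φ) (hφ0 : φ 0 = 0)
    (d : ℕ → ℕ) (k : ℕ) (B : ℕ → ℝ) (hB : ∀ i, 1 ≤ B i) (C : ℝ) (hC : 1 ≤ C)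
    (x : EuclideanSpace ℝ (Fin (d 0))) (hx : ‖x‖ ≤ C) (j : ℕ) :
    (∀ p : Params d k, (∀ i, sNorm (pW d k p i) ≤ B i) →
        ‖net φ d (pW d k p) j x‖ ≤ (∏ i ∈ range j, B i) * C)
    ∧ (∀ p q : Params d k, (∀ i, sNorm (pW d k p i) ≤ B i) →
        (∀ i, sNorm (pW d k q i) ≤ B i) →
        ‖net φ d (pW d k p) j x - net φ d (pW d k q) j x‖
          ≤ ((∑ i ∈ range j, ∏ l ∈ (range j).erase i, B l) * C) * ‖p - q‖)
    ∧ (Differentiable ℝ φ → LipschitzWith 1 (deriv φ) →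
        ∃ D : Params d k → (Params d k →L[ℝ] EuclideanSpace ℝ (Fin (d j))),
          (∀ p, HasFDerivAt (fun r : Params d k => net φ d (pW d k r) j x) (D p) p)
          ∧ (∀ p, (∀ i, sNorm (pW d k p i) ≤ B i) →
              ‖D p‖ ≤ (∑ i ∈ range j, ∏ l ∈ (range j).erase i, B l) * C)
          ∧ (∀ p q, (∀ i, sNorm (pW d k p i) ≤ B i) → (∀ i, sNorm (pW d k q i) ≤ B i) →
              ‖D p - D q‖ ≤ (3 * (j:ℝ) *
                  (∑ i ∈ range j, ∏ l ∈ (range j).erase i, B l) ^ 2 * C ^ 2) * ‖p - q‖)) := by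
  induction j with
  | zero =>
    refine ⟨fun p _ => by simpa [net] using hx, fun p q _ _ => by simp [net], fun _ _ => ?_⟩
    refine ⟨fun _ => 0, fun p => hasFDerivAt_const x p, fun p _ => by simp, fun p q _ _ => by simp⟩
  | succ j ih =>
    obtain ⟨ih1, ih2, ih3⟩ := ih
    set ψ : ℝ → ℝ := if j = 0 then id else φ with hψdef
    have hψL : LipschitzWith 1 ψ := by
      rw [hψdef]; split_ifs; exacts [LipschitzWith.id, hφ]
    have hψ0 : ψ 0 = 0 := by rw [hψdef]; split_ifs; exacts [rfl, hφ0]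
    set A : Params d k → EuclideanSpace ℝ (Fin (d j)) := fun r => net φ d (pW d k r) j x
      with hA
    have hstep : ∀ r : Params d k,
        net φ d (pW d k r) (j+1) x = matCLM (pW d k r j) (Phi ψ (d j) (A r)) := by
      intro r; rw [net_succ_s8]
    have hBj0 : (0:ℝ) ≤ B j := zero_le_one.trans (hB j)
    have hC0 : (0:ℝ) ≤ C := zero_le_one.trans hC
    have hΔ0 : 0 ≤ ∑ i ∈ range j, ∏ l ∈ (range j).erase i, B l := Δ_nonneg hB j
    have hPr0 : 0 ≤ ∏ i ∈ range j, B i := Pr_nonneg hB j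
    constructor
    · -- norm bound
      intro p hp
      rw [hstep]
      calc ‖matCLM (pW d k p j) (Phi ψ (d j) (A p))‖
          ≤ sNorm (pW d k p j) * ‖Phi ψ (d j) (A p)‖ := matCLM_le _ _
        _ ≤ B j * ((∏ i ∈ range j, B i) * C) := by
            apply mul_le_mul (hp j) ((norm_Phi_le hψL hψ0 _).trans (ih1 p hp))
              (norm_nonneg _) hBj0
        _ = (∏ i ∈ range (j+1), B i) * C := by rw [Finset.prod_range_succ]; ring
    constructor
    · -- Lipschitz bound
      intro p q hp hq
      rw [hstep, hstep]
      have hsplit : matCLM (pW d k p j) (Phi ψ (d j) (A p))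
            - matCLM (pW d k q j) (Phi ψ (d j) (A q))
          = matCLM (pW d k (p - q) j) (Phi ψ (d j) (A p))
            + matCLM (pW d k q j) (Phi ψ (d j) (A p) - Phi ψ (d j) (A q)) := by
        rw [pW_sub, matCLM_sub_left, map_sub]
        abel
      rw [hsplit]
      have t1 : ‖matCLM (pW d k (p - q) j) (Phi ψ (d j) (A p))‖
          ≤ ‖p - q‖ * ((∏ i ∈ range j, B i) * C) := by
        refine (matCLM_le _ _).trans ?_
        exact mul_le_mul (sNorm_pW_le d k (p - q) j)
          ((norm_Phi_le hψL hψ0 _).trans (ih1 p hp)) (norm_nonneg _) (norm_nonneg _)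
      have t2 : ‖matCLM (pW d k q j) (Phi ψ (d j) (A p) - Phi ψ (d j) (A q))‖
          ≤ B j * (((∑ i ∈ range j, ∏ l ∈ (range j).erase i, B l) * C) * ‖p - q‖) := by
        refine (matCLM_le _ _).trans ?_
        exact mul_le_mul (hq j)
          ((norm_Phi_sub_le hψL _ _).trans (ih2 p q hp hq)) (norm_nonneg _) hBj0
      calc ‖matCLM (pW d k (p - q) j) (Phi ψ (d j) (A p))
            + matCLM (pW d k q j) (Phi ψ (d j) (A p) - Phi ψ (d j) (A q))‖
          ≤ ‖matCLM (pW d k (p - q) j) (Phi ψ (d j) (A p))‖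
            + ‖matCLM (pW d k q j) (Phi ψ (d j) (A p) - Phi ψ (d j) (A q))‖ := norm_add_le _ _
        _ ≤ ‖p - q‖ * ((∏ i ∈ range j, B i) * C)
            + B j * (((∑ i ∈ range j, ∏ l ∈ (range j).erase i, B l) * C) * ‖p - q‖) := by
            linarith
        _ = ((∑ i ∈ range (j+1), ∏ l ∈ (range (j+1)).erase i, B l) * C) * ‖p - q‖ := by
            rw [Δ_succ hB]; ring
    · -- smoothness
      intro hφd hφ'
      obtain ⟨D, hD, hDb, hDl⟩ := ih3 hφd hφ'
      have hψd : Differentiable ℝ ψ := by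
        rw [hψdef]; split_ifs; exacts [differentiable_id, hφd]
      have hψ'b : ∀ t, |deriv ψ t| ≤ 1 := abs_deriv_le_one hψL hψd
      have hψ'L : LipschitzWith 1 (deriv ψ) := by
        rw [hψdef]; split_ifs
        · have hid : deriv (id : ℝ → ℝ) = fun _ => 1 := funext fun t => deriv_id t
          rw [hid]
          exact (LipschitzWith.const (1:ℝ)).weaken zero_le_one
        · exact hφ'
      refine ⟨fun p => ((isBBM d k j).deriv (p, Phi ψ (d j) (A p))).comp
          ((ContinuousLinearMap.id ℝ (Params d k)).prod
            ((diagCLM fun i => deriv ψ (A p i)).comp (D p))), ?_, ?_, ?_⟩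
      · intro p
        have h2 : HasFDerivAt (fun r => Phi ψ (d j) (A r))
            ((diagCLM fun i => deriv ψ (A p i)).comp (D p)) p :=
          (hasFDerivAt_Phi hψd (A p)).comp p (hD p)
        have h3 : HasFDerivAt (fun r => (r, Phi ψ (d j) (A r)))
            ((ContinuousLinearMap.id ℝ (Params d k)).prod
              ((diagCLM fun i => deriv ψ (A p i)).comp (D p))) p :=
          HasFDerivAt.prodMk (hasFDerivAt_id p) h2
        have h4 := ((isBBM d k j).hasFDerivAt (p, Phi ψ (d j) (A p))).comp p h3
        have hfe : ((fun pu : Params d k × EuclideanSpace ℝ (Fin (d j)) =>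
              matCLM (pW d k pu.1 j) pu.2) ∘ (fun r => (r, Phi ψ (d j) (A r))))
            = fun r : Params d k => net φ d (pW d k r) (j+1) x := by
          funext r
          rw [hstep]
          rfl
        rw [hfe] at h4
        exact h4
      · intro p hp
        have hK : (0:ℝ) ≤ (∑ i ∈ range (j+1), ∏ l ∈ (range (j+1)).erase i, B l) * C :=
          mul_nonneg (Δ_nonneg hB _) hC0
        apply ContinuousLinearMap.opNorm_le_bound _ hK
        intro v
        have happ : (((isBBM d k j).deriv (p, Phi ψ (d j) (A p))).comp
              ((ContinuousLinearMap.id ℝ (Params d k)).prod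
                ((diagCLM fun i => deriv ψ (A p i)).comp (D p)))) v
            = matCLM (pW d k p j) ((diagCLM fun i => deriv ψ (A p i)) (D p v))
              + matCLM (pW d k v j) (Phi ψ (d j) (A p)) := by
          simp [ContinuousLinearMap.comp_apply, ContinuousLinearMap.prod_apply]
        rw [happ]
        have hw : ‖D p v‖ ≤ ((∑ i ∈ range j, ∏ l ∈ (range j).erase i, B l) * C) * ‖v‖ :=
          ((D p).le_opNorm v).trans (mul_le_mul_of_nonneg_right (hDb p hp) (norm_nonneg v))
        have hdg : ‖(diagCLM fun i => deriv ψ (A p i)) (D p v)‖ ≤ ‖D p v‖ := by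
          simpa using diagCLM_norm_le zero_le_one (fun i => hψ'b _) (D p v)
        have t1 : ‖matCLM (pW d k p j) ((diagCLM fun i => deriv ψ (A p i)) (D p v))‖
            ≤ B j * (((∑ i ∈ range j, ∏ l ∈ (range j).erase i, B l) * C) * ‖v‖) :=
          (matCLM_le _ _).trans (mul_le_mul (hp j) (hdg.trans hw) (norm_nonneg _) hBj0)
        have t2 : ‖matCLM (pW d k v j) (Phi ψ (d j) (A p))‖
            ≤ ‖v‖ * ((∏ i ∈ range j, B i) * C) :=
          (matCLM_le _ _).trans (mul_le_mul (sNorm_pW_le d k v j)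
            ((norm_Phi_le hψL hψ0 _).trans (ih1 p hp)) (norm_nonneg _) (norm_nonneg _))
        refine (norm_add_le _ _).trans ?_
        rw [Δ_succ hB]
        nlinarith [t1, t2, norm_nonneg v]
      · intro p q hp hq
        have hcast : ((j:ℝ)+1) = ((j+1 : ℕ) : ℝ) := by push_cast; ring
        rw [← hcast]
        set a := ∑ i ∈ range j, ∏ l ∈ (range j).erase i, B l with ha
        set a' := ∑ i ∈ range (j+1), ∏ l ∈ (range (j+1)).erase i, B l with ha'
        have hK : (0:ℝ) ≤ (3 * ((j:ℝ)+1) * a' ^ 2 * C ^ 2) * ‖p - q‖ := by positivity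
        apply ContinuousLinearMap.opNorm_le_bound _ hK
        intro v
        have happ : ∀ r : Params d k, (((isBBM d k j).deriv (r, Phi ψ (d j) (A r))).comp
              ((ContinuousLinearMap.id ℝ (Params d k)).prod
                ((diagCLM fun i => deriv ψ (A r i)).comp (D r)))) v
            = matCLM (pW d k r j) ((diagCLM fun i => deriv ψ (A r i)) (D r v))
              + matCLM (pW d k v j) (Phi ψ (d j) (A r)) := by
          intro r
          simp [ContinuousLinearMap.comp_apply, ContinuousLinearMap.prod_apply]
        rw [ContinuousLinearMap.sub_apply, happ p, happ q]
        have hdecomp : matCLM (pW d k p j) ((diagCLM fun i => deriv ψ (A p i)) (D p v))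
              + matCLM (pW d k v j) (Phi ψ (d j) (A p))
              - (matCLM (pW d k q j) ((diagCLM fun i => deriv ψ (A q i)) (D q v))
                + matCLM (pW d k v j) (Phi ψ (d j) (A q)))
            = matCLM (pW d k v j) (Phi ψ (d j) (A p) - Phi ψ (d j) (A q))
              + matCLM (pW d k (p - q) j) ((diagCLM fun i => deriv ψ (A p i)) (D p v))
              + matCLM (pW d k q j)
                  (diagCLM ((fun i => deriv ψ (A p i)) - fun i => deriv ψ (A q i)) (D p v))
              + matCLM (pW d k q j) ((diagCLM fun i => deriv ψ (A q i)) (D p v - D q v)) := by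
          simp only [pW_sub, matCLM_sub_left, map_sub, ← diagCLM_sub_apply]
          abel
        rw [hdecomp]
        have hA2 : ‖A p - A q‖ ≤ (a * C) * ‖p - q‖ := ih2 p q hp hq
        have hw : ‖D p v‖ ≤ (a * C) * ‖v‖ :=
          ((D p).le_opNorm v).trans (mul_le_mul_of_nonneg_right (hDb p hp) (norm_nonneg v))
        have hwsub : ‖D p v - D q v‖ ≤ ((3 * (j:ℝ) * a ^ 2 * C ^ 2) * ‖p - q‖) * ‖v‖ := by
          have h1 : ‖D p v - D q v‖ ≤ ‖D p - D q‖ * ‖v‖ := by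
            have := (D p - D q).le_opNorm v
            simpa using this
          exact h1.trans (mul_le_mul_of_nonneg_right (hDl p q hp hq) (norm_nonneg v))
        have t1 : ‖matCLM (pW d k v j) (Phi ψ (d j) (A p) - Phi ψ (d j) (A q))‖
            ≤ (a * C) * (‖p - q‖ * ‖v‖) := by
          refine (matCLM_le _ _).trans ?_
          have := mul_le_mul (sNorm_pW_le d k v j)
            ((norm_Phi_sub_le hψL _ _).trans hA2) (norm_nonneg _) (norm_nonneg _)
          calc sNorm (pW d k v j) * ‖Phi ψ (d j) (A p) - Phi ψ (d j) (A q)‖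
              ≤ ‖v‖ * ((a * C) * ‖p - q‖) := this
            _ = (a * C) * (‖p - q‖ * ‖v‖) := by ring
        have t2 : ‖matCLM (pW d k (p - q) j) ((diagCLM fun i => deriv ψ (A p i)) (D p v))‖
            ≤ (a * C) * (‖p - q‖ * ‖v‖) := by
          refine (matCLM_le _ _).trans ?_
          have hdg : ‖(diagCLM fun i => deriv ψ (A p i)) (D p v)‖ ≤ (a * C) * ‖v‖ := by
            have h0 : ‖(diagCLM fun i => deriv ψ (A p i)) (D p v)‖ ≤ ‖D p v‖ := by
              simpa using diagCLM_norm_le zero_le_one (fun i => hψ'b _) (D p v)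
            exact h0.trans hw
          calc sNorm (pW d k (p - q) j) * ‖(diagCLM fun i => deriv ψ (A p i)) (D p v)‖
              ≤ ‖p - q‖ * ((a * C) * ‖v‖) :=
                mul_le_mul (sNorm_pW_le d k (p - q) j) hdg (norm_nonneg _) (norm_nonneg _)
            _ = (a * C) * (‖p - q‖ * ‖v‖) := by ring
        have t3 : ‖matCLM (pW d k q j)
              (diagCLM ((fun i => deriv ψ (A p i)) - fun i => deriv ψ (A q i)) (D p v))‖
            ≤ (B j * (a ^ 2 * C ^ 2)) * (‖p - q‖ * ‖v‖) := by
          refine (matCLM_le _ _).trans ?_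
          have hdg : ‖diagCLM ((fun i => deriv ψ (A p i)) - fun i => deriv ψ (A q i)) (D p v)‖
              ≤ ‖A p - A q‖ * ‖D p v‖ := by
            apply diagCLM_norm_le (norm_nonneg _) ?_ (D p v)
            intro i
            have h1 : |deriv ψ (A p i) - deriv ψ (A q i)| ≤ |A p i - A q i| :=
              abs_sub_le_of_lip hψ'L _ _
            have h2 : |A p i - A q i| ≤ ‖A p - A q‖ := by
              have h3 := coord_le_norm (A p - A q) i
              have h4 : (A p - A q) i = A p i - A q i := by simp
              rwa [h4, Real.norm_eq_abs] at h3
            exact le_trans (by simpa using h1) (h2)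
          have hprod : ‖A p - A q‖ * ‖D p v‖ ≤ ((a * C) * ‖p - q‖) * ((a * C) * ‖v‖) :=
            mul_le_mul hA2 hw (norm_nonneg _) (by positivity)
          calc sNorm (pW d k q j) * ‖diagCLM ((fun i => deriv ψ (A p i))
                  - fun i => deriv ψ (A q i)) (D p v)‖
              ≤ B j * (((a * C) * ‖p - q‖) * ((a * C) * ‖v‖)) :=
                mul_le_mul (hq j) (hdg.trans hprod) (norm_nonneg _) hBj0
            _ = (B j * (a ^ 2 * C ^ 2)) * (‖p - q‖ * ‖v‖) := by ring
        have t4 : ‖matCLM (pW d k q j) ((diagCLM fun i => deriv ψ (A q i)) (D p v - D q v))‖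
            ≤ (B j * (3 * (j:ℝ) * a ^ 2 * C ^ 2)) * (‖p - q‖ * ‖v‖) := by
          refine (matCLM_le _ _).trans ?_
          have hdg : ‖(diagCLM fun i => deriv ψ (A q i)) (D p v - D q v)‖
              ≤ ‖D p v - D q v‖ := by
            simpa using diagCLM_norm_le zero_le_one (fun i => hψ'b _) (D p v - D q v)
          calc sNorm (pW d k q j) * ‖(diagCLM fun i => deriv ψ (A q i)) (D p v - D q v)‖
              ≤ B j * (((3 * (j:ℝ) * a ^ 2 * C ^ 2) * ‖p - q‖) * ‖v‖) :=
                mul_le_mul (hq j) (hdg.trans hwsub) (norm_nonneg _) hBj0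
            _ = (B j * (3 * (j:ℝ) * a ^ 2 * C ^ 2)) * (‖p - q‖ * ‖v‖) := by ring
        -- coefficient arithmetic
        have f1 : a ≤ a' := Δ_le_succ hB j
        have f2 : B j * a ≤ a' := by
          rw [ha', Δ_succ hB]
          linarith [hPr0]
        have f3 : a ≤ a ^ 2 := Δ_le_sq hB j
        have hΔ'0 : 0 ≤ a' := Δ_nonneg hB (j+1)
        have hCsq : C ≤ C ^ 2 := by
          calc C = C * 1 := by ring
            _ ≤ C * C := mul_le_mul_of_nonneg_left hC hC0
            _ = C ^ 2 := by ring
        have h5 : a * C ≤ a' ^ 2 * C ^ 2 := by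
          have h51 : a ^ 2 ≤ a' ^ 2 := pow_le_pow_left₀ hΔ0 f1 2
          have h52 : a ≤ a' ^ 2 := f3.trans h51
          calc a * C ≤ a' ^ 2 * C := mul_le_mul_of_nonneg_right h52 hC0
            _ ≤ a' ^ 2 * C ^ 2 := mul_le_mul_of_nonneg_left hCsq (sq_nonneg a')
        have h6 : B j * (a ^ 2 * C ^ 2) ≤ a' ^ 2 * C ^ 2 := by
          have h61 : B j * a ^ 2 ≤ a' ^ 2 := by
            calc B j * a ^ 2 = (B j * a) * a := by ring
              _ ≤ a' * a' := mul_le_mul f2 f1 hΔ0 hΔ'0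
              _ = a' ^ 2 := by ring
          calc B j * (a ^ 2 * C ^ 2) = (B j * a ^ 2) * C ^ 2 := by ring
            _ ≤ a' ^ 2 * C ^ 2 := mul_le_mul_of_nonneg_right h61 (sq_nonneg C)
        have h7 : B j * (3 * (j:ℝ) * a ^ 2 * C ^ 2) ≤ 3 * (j:ℝ) * (a' ^ 2 * C ^ 2) := by
          have hj0 : (0:ℝ) ≤ 3 * (j:ℝ) := by positivity
          calc B j * (3 * (j:ℝ) * a ^ 2 * C ^ 2) = 3 * (j:ℝ) * (B j * (a ^ 2 * C ^ 2)) := by ring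
            _ ≤ 3 * (j:ℝ) * (a' ^ 2 * C ^ 2) := mul_le_mul_of_nonneg_left h6 hj0
        have hpqv : (0:ℝ) ≤ ‖p - q‖ * ‖v‖ := by positivity
        refine le_trans (le_trans (norm_add_le _ _) (add_le_add (le_trans (norm_add_le _ _)
          (add_le_add (le_trans (norm_add_le _ _) (add_le_add t1 t2)) t3)) t4)) ?_
        have m5 := mul_le_mul_of_nonneg_right h5 hpqv
        have m6 := mul_le_mul_of_nonneg_right h6 hpqv
        have m7 := mul_le_mul_of_nonneg_right h7 hpqv
        linarith [m5, m6, m7]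


/-- For a `k`-layer network with `1`-Lipschitz activation `φ`, `φ 0 = 0`, weight
spectral norms at most `B i ≥ 1`, `‖x‖ ≤ C` with `C ≥ 1`, and a loss `ℓ(·,y)` that
is `1`-Lipschitz for every label `y`, the training loss `W ↦ ℓ(f_W(x), y)` is
`Δ_{k,1} C`-Lipschitz in the parameters; if moreover `φ` and `ℓ(·,y)` are `1`-smooth
(and differentiable), it is `(3k+1) Δ_{k,1}² C²`-smooth, i.e. its gradient is
`(3k+1) Δ_{k,1}² C²`-Lipschitz.  Here `Δ_{k,1} = ∑_{i=1}^k ∏_{j ≠ i} B_j`. -/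
theorem net_loss_lipschitz_and_smooth {Y : Type*} (φ : ℝ → ℝ)
    (hφ : LipschitzWith 1 φ) (hφ0 : φ 0 = 0)
    (d : ℕ → ℕ) (k : ℕ) (B : ℕ → ℝ) (hB : ∀ i, 1 ≤ B i) (C : ℝ) (hC : 1 ≤ C)
    (x : EuclideanSpace ℝ (Fin (d 0))) (hx : ‖x‖ ≤ C)
    (ℓ : Y → EuclideanSpace ℝ (Fin (d k)) → ℝ)
    (hℓ : ∀ y, LipschitzWith 1 (ℓ y)) (y : Y)
    (p q : Params d k)
    (hp : ∀ i : Fin k, sNorm (pW d k p i.1) ≤ B i.1)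
    (hq : ∀ i : Fin k, sNorm (pW d k q i.1) ≤ B i.1) :
    (|ℓ y (netP φ d k p x) - ℓ y (netP φ d k q x)|
        ≤ ((∑ i ∈ range k, ∏ j ∈ (range k).erase i, B j) * C) * ‖p - q‖)
    ∧ ((Differentiable ℝ φ ∧ LipschitzWith 1 (deriv φ)
          ∧ Differentiable ℝ (ℓ y) ∧ LipschitzWith 1 (gradient (ℓ y))) →
        ‖gradient (fun r : Params d k => ℓ y (netP φ d k r x)) p
            - gradient (fun r : Params d k => ℓ y (netP φ d k r x)) q‖
          ≤ ((3 * k + 1) * (∑ i ∈ range k, ∏ j ∈ (range k).erase i, B j) ^ 2 * C ^ 2)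
              * ‖p - q‖) := by
  have hext : ∀ r : Params d k, (∀ i : Fin k, sNorm (pW d k r i.1) ≤ B i.1) →
      ∀ i : ℕ, sNorm (pW d k r i) ≤ B i := by
    intro r hr i
    by_cases h : i < k
    · exact hr ⟨i, h⟩
    · have h0 : pW d k r i = 0 := dif_neg h
      rw [h0, sNorm_zero]
      exact zero_le_one.trans (hB i)
  have hp' := hext p hp
  have hq' := hext q hq
  obtain ⟨m1, m2, m3⟩ := main_ind φ hφ hφ0 d k B hB C hC x hx k
  set a := ∑ i ∈ range k, ∏ l ∈ (range k).erase i, B l with ha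
  have hΔ0 : 0 ≤ a := Δ_nonneg hB k
  have hC0 : (0:ℝ) ≤ C := zero_le_one.trans hC
  constructor
  · have h1 := (hℓ y).dist_le_mul (netP φ d k p x) (netP φ d k q x)
    rw [Real.dist_eq, dist_eq_norm, NNReal.coe_one, one_mul] at h1
    exact h1.trans (m2 p q hp' hq')
  · rintro ⟨hφd, hφ', hℓd, hℓ'⟩
    obtain ⟨D, hD, hDb, hDl⟩ := m3 hφd hφ'
    have hFd : ∀ r : Params d k,
        HasFDerivAt (fun r : Params d k => ℓ y (netP φ d k r x))
          ((fderiv ℝ (ℓ y) (net φ d (pW d k r) k x)).comp (D r)) r := by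
      intro r
      exact ((hℓd _).hasFDerivAt.comp r (hD r))
    have hgrad : ∀ r : Params d k,
        gradient (fun r : Params d k => ℓ y (netP φ d k r x)) r
          = (InnerProductSpace.toDual ℝ (Params d k)).symm
              ((fderiv ℝ (ℓ y) (net φ d (pW d k r) k x)).comp (D r)) := by
      intro r
      rw [gradient, (hFd r).fderiv]
    rw [hgrad p, hgrad q]
    set Gp := fderiv ℝ (ℓ y) (net φ d (pW d k p) k x) with hGp
    set Gq := fderiv ℝ (ℓ y) (net φ d (pW d k q) k x) with hGq
    have hnorm : ‖(InnerProductSpace.toDual ℝ (Params d k)).symm (Gp.comp (D p))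
          - (InnerProductSpace.toDual ℝ (Params d k)).symm (Gq.comp (D q))‖
        = ‖Gp.comp (D p) - Gq.comp (D q)‖ := by
      rw [← map_sub]
      exact (InnerProductSpace.toDual ℝ (Params d k)).symm.norm_map _
    rw [hnorm]
    have hsplit : Gp.comp (D p) - Gq.comp (D q)
        = (Gp - Gq).comp (D p) + Gq.comp (D p - D q) := by
      rw [ContinuousLinearMap.sub_comp, ContinuousLinearMap.comp_sub]
      abel
    rw [hsplit]
    have hGdiff : ‖Gp - Gq‖ ≤ (a * C) * ‖p - q‖ := by
      have hGz : ∀ z, fderiv ℝ (ℓ y) z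
          = InnerProductSpace.toDual ℝ (EuclideanSpace ℝ (Fin (d k))) (gradient (ℓ y) z) := by
        intro z
        rw [gradient, LinearIsometryEquiv.apply_symm_apply]
      rw [hGp, hGq, hGz, hGz, ← map_sub]
      rw [(InnerProductSpace.toDual ℝ (EuclideanSpace ℝ (Fin (d k)))).norm_map]
      have h1 := hℓ'.dist_le_mul (net φ d (pW d k p) k x) (net φ d (pW d k q) k x)
      rw [dist_eq_norm, dist_eq_norm, NNReal.coe_one, one_mul] at h1
      exact h1.trans (m2 p q hp' hq')
    have hGq1 : ‖Gq‖ ≤ 1 := by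
      have := norm_fderiv_le_of_lipschitz ℝ (hℓ y) (x₀ := net φ d (pW d k q) k x)
      simpa using this
    have t1 : ‖(Gp - Gq).comp (D p)‖ ≤ ((a * C) * ‖p - q‖) * (a * C) :=
      (ContinuousLinearMap.opNorm_comp_le _ _).trans
        (mul_le_mul hGdiff (hDb p hp') (norm_nonneg _) (by positivity))
    have t2 : ‖Gq.comp (D p - D q)‖ ≤ 1 * ((3 * (k:ℝ) * a ^ 2 * C ^ 2) * ‖p - q‖) :=
      (ContinuousLinearMap.opNorm_comp_le _ _).trans
        (mul_le_mul hGq1 (hDl p q hp' hq') (norm_nonneg _) zero_le_one)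
    refine (norm_add_le _ _).trans ?_
    have hfin : ((a * C) * ‖p - q‖) * (a * C) + 1 * ((3 * (k:ℝ) * a ^ 2 * C ^ 2) * ‖p - q‖)
        = ((3 * (k:ℝ) + 1) * a ^ 2 * C ^ 2) * ‖p - q‖ := by ring
    linarith [t1, t2]
end
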